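/- Let A, A', B, B', C, C' be nonempty finite types, and let 𝓔₁ (a channel from A' × B' to A × B) and 𝓔₂ (a channel from B' × C' to B × C) be compatible. Then 𝓔₁ and 𝓔₂ are locally compatible: there exists a quantum channel 𝓖 from B' to B such that for every quantum state σ on A' × B', 𝓖 (tr_{A'} σ) = tr_A (𝓔₁ σ), and for every quantum state τ on B' × C', 𝓖 (tr_{C'} τ) = tr_C (𝓔₂ τ). -/

import Mathlib

set_option linter.unusedSectionVars false

open Matrix Kronecker
open scoped ComplexOrder

noncomputable section

section Aux

/-- maximally mixed state -/
def mix (n : Type*) [Fintype n] [DecidableEq n] : Matrix n n ℂ :=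
  (1 / (Fintype.card n : ℂ)) • 1

variable {n m : Type*} [Fintype n] [Fintype m]

lemma card_ne_zero' (n : Type*) [Fintype n] [Nonempty n] : (Fintype.card n : ℂ) ≠ 0 :=
  Nat.cast_ne_zero.mpr Fintype.card_ne_zero

lemma inv_card_nonneg (n : Type*) [Fintype n] : (0:ℂ) ≤ 1 / (Fintype.card n : ℂ) := by
  rw [show ((Fintype.card n : ℂ)) = ((Fintype.card n : ℝ) : ℂ) by push_cast; ring,
    ← Complex.ofReal_one, ← Complex.ofReal_div]
  exact_mod_cast (by positivity : (0:ℝ) ≤ 1 / (Fintype.card n : ℝ))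

lemma mix_posSemidef (n : Type*) [Fintype n] [DecidableEq n] : (mix n).PosSemidef := by
  constructor
  · unfold mix
    ext i j
    simp only [conjTranspose_apply, Matrix.smul_apply, one_apply, star_mul', smul_eq_mul]
    rw [star_div₀]
    by_cases h : i = j <;> simp [h, eq_comm]
  · intro x
    exact (Matrix.PosSemidef.one.smul (inv_card_nonneg n)).2 x

lemma trace_mix (n : Type*) [Fintype n] [DecidableEq n] [Nonempty n] : (mix n).trace = 1 := by
  simp only [mix, Matrix.trace_smul, Matrix.trace_one, smul_eq_mul]
  field_simp

lemma kroneckerPSD {M : Matrix n n ℂ} {N : Matrix m m ℂ}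
    (hM : M.PosSemidef) (hN : N.PosSemidef) : (M ⊗ₖ N).PosSemidef := by
  exact Matrix.PosSemidef.kronecker hM hN

lemma trace_submatrix_equiv' (M : Matrix n n ℂ) (e : m ≃ n) :
    (M.submatrix e e).trace = M.trace :=
  Fintype.sum_equiv e _ _ (fun _ => rfl)

end Aux


/-- A quantum state: positive semidefinite with unit trace. -/
def IsState {n : Type*} [Fintype n] (ρ : Matrix n n ℂ) : Prop :=
  ρ.PosSemidef ∧ ρ.trace = 1

/-- The Choi matrix of a linear map on matrices. -/
def choi {n m : Type*} [Fintype n] [DecidableEq n]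
    (𝓔 : Matrix n n ℂ →ₗ[ℂ] Matrix m m ℂ) : Matrix (m × n) (m × n) ℂ :=
  Matrix.of fun p q =>
    (1 / (Fintype.card n : ℂ)) * 𝓔 (Matrix.single p.2 q.2 1) p.1 q.1

/-- A quantum channel: trace preserving and completely positive. -/
def IsChannel {n m : Type*} [Fintype n] [DecidableEq n] [Fintype m]
    (𝓔 : Matrix n n ℂ →ₗ[ℂ] Matrix m m ℂ) : Prop :=
  (∀ ρ : Matrix n n ℂ, (𝓔 ρ).trace = ρ.trace) ∧ (choi 𝓔).PosSemidef

/-- Partial trace over the second (right) factor. -/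
def trR {a b : Type*} [Fintype b] (M : Matrix (a × b) (a × b) ℂ) : Matrix a a ℂ :=
  Matrix.of fun i j => ∑ k, M (i, k) (j, k)

/-- Partial trace over the first (left) factor. -/
def trL {a b : Type*} [Fintype a] (M : Matrix (a × b) (a × b) ℂ) : Matrix b b ℂ :=
  Matrix.of fun i j => ∑ k, M (k, i) (k, j)

/-- Partial trace over the third factor of a triple product. -/
def trC3 {a b c : Type*} [Fintype c] (M : Matrix (a × b × c) (a × b × c) ℂ) :
    Matrix (a × b) (a × b) ℂ :=
  Matrix.of fun i j => ∑ k, M (i.1, i.2, k) (j.1, j.2, k)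

/-- Compatibility of two local channels with a single global channel. -/
def Compatible {A A' B B' C C' : Type*}
    [Fintype A] [Fintype A'] [Fintype B] [Fintype B'] [Fintype C] [Fintype C']
    [DecidableEq A'] [DecidableEq B'] [DecidableEq C']
    (𝓔₁ : Matrix (A' × B') (A' × B') ℂ →ₗ[ℂ] Matrix (A × B) (A × B) ℂ)
    (𝓔₂ : Matrix (B' × C') (B' × C') ℂ →ₗ[ℂ] Matrix (B × C) (B × C) ℂ) : Prop :=
  ∃ 𝓔 : Matrix (A' × B' × C') (A' × B' × C') ℂ →ₗ[ℂ] Matrix (A × B × C) (A × B × C) ℂ,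
    IsChannel 𝓔 ∧ ∀ ρ : Matrix (A' × B' × C') (A' × B' × C') ℂ, IsState ρ →
      trC3 (𝓔 ρ) = 𝓔₁ (trC3 ρ) ∧ trL (𝓔 ρ) = 𝓔₂ (trL ρ)


section Aux2

variable {a b c : Type*} [Fintype a] [Fintype b] [Fintype c]

lemma trL_eq_sum_submatrix (M : Matrix (a × b) (a × b) ℂ) :
    trL M = ∑ k : a, M.submatrix (Prod.mk k) (Prod.mk k) := by
  ext i j
  simp [trL, Matrix.sum_apply]

lemma posSemidef_sum {ι n : Type*} [Fintype n] (s : Finset ι) (f : ι → Matrix n n ℂ)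
    (h : ∀ i ∈ s, (f i).PosSemidef) : (∑ i ∈ s, f i).PosSemidef := by
  classical
  induction s using Finset.induction with
  | empty => simpa using Matrix.PosSemidef.zero
  | insert _ _ hx ih =>
      rw [Finset.sum_insert hx]
      exact ((h _ (by simp)).add (ih fun i hi => h i (by simp [hi])))

lemma posSemidef_trL {M : Matrix (a × b) (a × b) ℂ} (hM : M.PosSemidef) :
    (trL M).PosSemidef := by
  rw [trL_eq_sum_submatrix]
  exact posSemidef_sum _ _ fun k _ => hM.submatrix _

lemma posSemidef_trR {M : Matrix (a × b) (a × b) ℂ} (hM : M.PosSemidef) :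
    (trR M).PosSemidef := by
  have : trR M = ∑ k : b, M.submatrix (fun i => (i, k)) (fun i => (i, k)) := by
    ext i j
    simp [trR, Matrix.sum_apply]
  rw [this]
  exact posSemidef_sum _ _ fun k _ => hM.submatrix _

lemma trace_trL (M : Matrix (a × b) (a × b) ℂ) : (trL M).trace = M.trace := by
  simp only [trL, Matrix.trace, Matrix.diag, of_apply, Fintype.sum_prod_type]
  exact Finset.sum_comm

lemma trace_trR (M : Matrix (a × b) (a × b) ℂ) : (trR M).trace = M.trace := by
  simp only [trR, Matrix.trace, Matrix.diag, of_apply, Fintype.sum_prod_type]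

lemma trace_trC3 (M : Matrix (a × b × c) (a × b × c) ℂ) : (trC3 M).trace = M.trace := by
  simp only [trC3, Matrix.trace, Matrix.diag, of_apply, Fintype.sum_prod_type]

lemma trL_trC3_eq_trR_trL (M : Matrix (a × b × c) (a × b × c) ℂ) :
    trL (trC3 M) = trR (trL M) := by
  ext i j
  simp only [trL, trR, trC3, of_apply]
  rw [Finset.sum_comm]

/-- tensoring with the maximally mixed state on the left, as a linear map -/
def tensLmap (a : Type*) {b : Type*} [Fintype a] [DecidableEq a] :
    Matrix b b ℂ →ₗ[ℂ] Matrix (a × b) (a × b) ℂ where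
  toFun X := Matrix.of fun p q =>
    (if p.1 = q.1 then (1 / (Fintype.card a : ℂ)) else 0) * X p.2 q.2
  map_add' X Y := by ext p q; simp [mul_add]
  map_smul' r X := by ext p q; simp; ring

/-- partial trace over the left factor, as a linear map -/
def trLmap (a : Type*) {b : Type*} [Fintype a] :
    Matrix (a × b) (a × b) ℂ →ₗ[ℂ] Matrix b b ℂ where
  toFun := trL
  map_add' M N := by ext i j; simp [trL, Finset.sum_add_distrib]
  map_smul' r M := by ext i j; simp [trL, Finset.mul_sum]

lemma tensLmap_eq_kron [DecidableEq a] (X : Matrix b b ℂ) :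
    tensLmap a X = mix a ⊗ₖ X := by
  ext p q
  simp [tensLmap, mix, kroneckerMap_apply, one_apply, ite_mul]

lemma trace_tensLmap [DecidableEq a] [Nonempty a] (X : Matrix b b ℂ) :
    (tensLmap a X).trace = X.trace := by
  rw [tensLmap_eq_kron, trace_kronecker, trace_mix, one_mul]

lemma trL_kron_mix [DecidableEq a] [Nonempty a] (X : Matrix b b ℂ) :
    trL (mix a ⊗ₖ X) = X := by
  ext i j
  simp only [trL, of_apply, kroneckerMap_apply, mix, Matrix.smul_apply, one_apply_eq, smul_eq_mul]
  rw [← Finset.sum_mul, Finset.sum_const]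
  simp only [Finset.card_univ, nsmul_eq_mul, mul_one]
  have := card_ne_zero' a
  field_simp

lemma trR_kron_mix [DecidableEq b] [Nonempty b] (X : Matrix a a ℂ) :
    trR (X ⊗ₖ mix b) = X := by
  ext i j
  simp only [trR, of_apply, kroneckerMap_apply, mix, Matrix.smul_apply, one_apply_eq, smul_eq_mul]
  rw [← Finset.mul_sum, Finset.sum_const]
  simp only [Finset.card_univ, nsmul_eq_mul, mul_one]
  have := card_ne_zero' b
  field_simp

lemma trC3_mix_kron [DecidableEq a] [Nonempty a] (X : Matrix (b × c) (b × c) ℂ) :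
    trC3 (mix a ⊗ₖ X) = tensLmap a (trR X) := by
  ext i j
  simp only [trC3, of_apply, kroneckerMap_apply, tensLmap, trR, LinearMap.coe_mk,
    AddHom.coe_mk, mix, Matrix.smul_apply, one_apply, smul_eq_mul]
  rw [← Finset.mul_sum]
  by_cases h : i.1 = j.1 <;> simp [h] <;> ring

lemma trL_assoc_kron (σ : Matrix (a × b) (a × b) ℂ) (N : Matrix c c ℂ) :
    trL ((σ ⊗ₖ N).submatrix (Equiv.prodAssoc a b c).symm (Equiv.prodAssoc a b c).symm)
      = trL σ ⊗ₖ N := by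
  ext i j
  simp only [trL, of_apply, submatrix_apply, Equiv.prodAssoc_symm_apply,
    kroneckerMap_apply, Finset.sum_mul]

lemma trC3_assoc_kron [DecidableEq c] [Nonempty c] (σ : Matrix (a × b) (a × b) ℂ) :
    trC3 ((σ ⊗ₖ mix c).submatrix (Equiv.prodAssoc a b c).symm (Equiv.prodAssoc a b c).symm)
      = σ := by
  ext i j
  simp only [trC3, of_apply, submatrix_apply, Equiv.prodAssoc_symm_apply,
    kroneckerMap_apply, mix, Matrix.smul_apply, one_apply_eq, smul_eq_mul]
  rw [← Finset.mul_sum, Finset.sum_const]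
  simp only [Finset.card_univ, nsmul_eq_mul, mul_one]
  have := card_ne_zero' c
  have hij : σ (i.1, i.2) (j.1, j.2) = σ i j := by
    rcases i with ⟨i1, i2⟩; rcases j with ⟨j1, j2⟩; rfl
  rw [hij]
  field_simp

end Aux2

section Choi

variable {A A' B B' : Type*} [Fintype A] [Fintype A'] [Fintype B] [Fintype B']
  [DecidableEq A'] [DecidableEq B'] [Nonempty A'] [Nonempty B']

lemma tensLmap_stdBasis (k l : B') :
    tensLmap A' (single k l (1:ℂ)) =
      (1 / (Fintype.card A' : ℂ)) • ∑ a' : A', single (a', k) (a', l) (1:ℂ) := by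
  ext ⟨a, i⟩ ⟨b, j⟩
  simp only [tensLmap, LinearMap.coe_mk, AddHom.coe_mk, of_apply, single,
    Matrix.smul_apply, Matrix.sum_apply, smul_eq_mul, Prod.mk.injEq]
  by_cases hab : a = b <;> by_cases hk : k = i <;> by_cases hl : l = j <;>
    simp [hab, hk, hl, Finset.mul_sum, Finset.filter_eq_empty_iff]

/-- the canonical reordering of indices -/
def reord (A A' B B' : Type*) : (A × A') × (B × B') → (A × B) × (A' × B') :=
  fun p => ((p.1.1, p.2.1), (p.1.2, p.2.2))

lemma choi_comp_eq (𝓔₁ : Matrix (A' × B') (A' × B') ℂ →ₗ[ℂ] Matrix (A × B) (A × B) ℂ) :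
    choi (trLmap A ∘ₗ 𝓔₁ ∘ₗ tensLmap A') =
      trL ((choi 𝓔₁).submatrix (reord A A' B B') (reord A A' B B')) := by
  ext ⟨i, k⟩ ⟨j, l⟩
  have h2 : 𝓔₁ (tensLmap A' (single k l (1:ℂ)))
      = (1 / (Fintype.card A' : ℂ)) • ∑ a' : A', 𝓔₁ (single (a', k) (a', l) (1:ℂ)) := by
    rw [tensLmap_stdBasis, _root_.map_smul, map_sum]
  have h3 : (trLmap A ∘ₗ 𝓔₁ ∘ₗ tensLmap A') (single k l (1:ℂ))
      = trL (𝓔₁ (tensLmap A' (single k l (1:ℂ)))) := rfl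
  simp only [choi, of_apply, h3, h2]
  simp only [trL, of_apply, Matrix.smul_apply, Matrix.sum_apply, smul_eq_mul,
    submatrix_apply, reord, Fintype.card_prod]
  rw [Fintype.sum_prod_type]
  push_cast
  rw [Finset.mul_sum]
  refine Finset.sum_congr rfl fun a _ => ?_
  rw [Finset.mul_sum, Finset.mul_sum]
  refine Finset.sum_congr rfl fun a' _ => ?_
  ring
end Choi

/-- Compatible channels are locally compatible: they share a common marginal channel
from `B'` to `B`. -/
theorem compatible_implies_locally_compatible
    {A A' B B' C C' : Type*}
    [Fintype A] [DecidableEq A] [Nonempty A] [Fintype A'] [DecidableEq A'] [Nonempty A']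
    [Fintype B] [DecidableEq B] [Nonempty B] [Fintype B'] [DecidableEq B'] [Nonempty B']
    [Fintype C] [DecidableEq C] [Nonempty C] [Fintype C'] [DecidableEq C'] [Nonempty C']
    (𝓔₁ : Matrix (A' × B') (A' × B') ℂ →ₗ[ℂ] Matrix (A × B) (A × B) ℂ)
    (𝓔₂ : Matrix (B' × C') (B' × C') ℂ →ₗ[ℂ] Matrix (B × C) (B × C) ℂ)
    (h₁ : IsChannel 𝓔₁) (h₂ : IsChannel 𝓔₂)
    (hcomp : Compatible 𝓔₁ 𝓔₂) :
    ∃ 𝓖 : Matrix B' B' ℂ →ₗ[ℂ] Matrix B B ℂ, IsChannel 𝓖 ∧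
      (∀ σ : Matrix (A' × B') (A' × B') ℂ, IsState σ → 𝓖 (trL σ) = trL (𝓔₁ σ)) ∧
      (∀ τ : Matrix (B' × C') (B' × C') ℂ, IsState τ → 𝓖 (trR τ) = trR (𝓔₂ τ)) := by
  obtain ⟨𝓔, h𝓔chan, hmarg⟩ := hcomp
  have hstar : ∀ ρ : Matrix (A' × B' × C') (A' × B' × C') ℂ, IsState ρ →
      trL (𝓔₁ (trC3 ρ)) = trR (𝓔₂ (trL ρ)) := by
    intro ρ hρ
    obtain ⟨e1, e2⟩ := hmarg ρ hρ
    rw [← e1, ← e2, trL_trC3_eq_trR_trL]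
  refine ⟨trLmap A ∘ₗ 𝓔₁ ∘ₗ tensLmap A', ⟨?_, ?_⟩, ?_, ?_⟩
  · intro ρ
    show (trL (𝓔₁ (tensLmap A' ρ))).trace = ρ.trace
    rw [trace_trL, h₁.1, trace_tensLmap]
  · rw [choi_comp_eq]
    exact posSemidef_trL (h₁.2.submatrix _)
  · intro σ hσ
    have hσL : IsState (trL σ) := ⟨posSemidef_trL hσ.1, by rw [trace_trL]; exact hσ.2⟩
    have hρ₁ : IsState ((σ ⊗ₖ mix C').submatrix (Equiv.prodAssoc A' B' C').symm
        (Equiv.prodAssoc A' B' C').symm) := by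
      refine ⟨(kroneckerPSD hσ.1 (mix_posSemidef C')).submatrix _, ?_⟩
      rw [trace_submatrix_equiv', trace_kronecker, hσ.2, trace_mix, one_mul]
    have hρ₂ : IsState (mix A' ⊗ₖ (trL σ ⊗ₖ mix C')) := by
      refine ⟨kroneckerPSD (mix_posSemidef A') (kroneckerPSD hσL.1 (mix_posSemidef C')), ?_⟩
      rw [trace_kronecker, trace_kronecker, trace_mix, trace_mix, hσL.2]; ring
    have k1 := hstar _ hρ₁
    have k2 := hstar _ hρ₂
    rw [trC3_assoc_kron, trL_assoc_kron] at k1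
    rw [trC3_mix_kron, trL_kron_mix, trR_kron_mix] at k2
    show trL (𝓔₁ (tensLmap A' (trL σ))) = trL (𝓔₁ σ)
    rw [k2, ← k1]
  · intro τ hτ
    have hρ₃ : IsState (mix A' ⊗ₖ τ) := by
      refine ⟨kroneckerPSD (mix_posSemidef A') hτ.1, ?_⟩
      rw [trace_kronecker, trace_mix, hτ.2, one_mul]
    have k3 := hstar _ hρ₃
    rw [trC3_mix_kron, trL_kron_mix] at k3
    show trL (𝓔₁ (tensLmap A' (trR τ))) = trR (𝓔₂ τ)
    exact k3
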